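/- Let G be a perfect group acting trivially on an abelian group C, and let A ≤ C be a subgroup. A 2-cocycle h : G × G → A is non-split via functions with values in A if and only if h, regarded as a 2-cocycle with values in C, is non-split via functions with values in C. -/

import Mathlib

/-- Let `G` be perfect acting trivially on an abelian group `C` with a
subgroup `A ≤ C`, and let `h` be a 2-cocycle with values in `A`. Then `h` is non-split
via `A`-valued functions iff it is non-split via `C`-valued functions. -/
theorem statement8 {G C : Type*} [Group G] [AddCommGroup C]
    (hG : commutator G = ⊤)
    (A : AddSubgroup C)
    (h : G → G → C) (hmem : ∀ x y : G, h x y ∈ A)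
    (hcoc : ∀ x y z : G, h x y + h (x * y) z = h x (y * z) + h y z)
    (hl : ∀ g : G, h 1 g = 0) (hr : ∀ g : G, h g 1 = 0) :
    (¬ ∃ f : G → C, (∀ x : G, f x ∈ A) ∧ f 1 = 0 ∧
        ∀ x y : G, h x y = f x + f y - f (x * y)) ↔
    (¬ ∃ f : G → C, f 1 = 0 ∧ ∀ x y : G, h x y = f x + f y - f (x * y)) := by
  apply not_congr
  constructor
  · rintro ⟨f, _, hf1, hsp⟩
    exact ⟨f, hf1, hsp⟩
  · rintro ⟨f, hf1, hsp⟩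
    refine ⟨f, ?_, hf1, hsp⟩
    -- the induced map G → C ⧸ A is a hom, hence trivial since G is perfect
    let φ : G →* Multiplicative (C ⧸ A) :=
      { toFun := fun x => Multiplicative.ofAdd (QuotientAddGroup.mk (f x))
        map_one' := by simp [hf1]
        map_mul' := by
          intro x y
          have : f x + f y - f (x * y) ∈ A := by rw [← hsp]; exact hmem x y
          have h2 : (QuotientAddGroup.mk (f (x * y)) : C ⧸ A) =
              QuotientAddGroup.mk (f x + f y) := by
            rw [QuotientAddGroup.eq]
            simpa [sub_eq_add_neg, add_comm] using this
          simp only [Multiplicative.ofAdd]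
          exact congrArg Multiplicative.ofAdd (h2.trans (QuotientAddGroup.mk_add A _ _)) }
    have hker : (⊤ : Subgroup G) ≤ φ.ker := by
      rw [← hG]; exact Abelianization.commutator_subset_ker φ
    intro x
    have : φ x = 1 := hker (Subgroup.mem_top x)
    have h0 : (QuotientAddGroup.mk (f x) : C ⧸ A) = 0 := by
      simpa [φ] using this
    exact (QuotientAddGroup.eq_zero_iff _).mp h0
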